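/- arXiv:1405.2953 — 6 statements merged into one kernel-verified Lean document; each statement's English description precedes it below -/
import Mathlib

section
/- Every Markov triple can be obtained from the basic triple (1,1,1) by a finite sequence of elementary transforms (a,b,c) ↦ (a,b,3ab−c) together with permutations of the entries. -/
/-- A Markov triple: positive integers with `a² + b² + c² = 3abc`. -/
def IsMarkovTriple (a b c : ℤ) : Prop :=
  0 < a ∧ 0 < b ∧ 0 < c ∧ a ^ 2 + b ^ 2 + c ^ 2 = 3 * a * b * c

/-- One step on triples: an elementary transform `(a,b,c) ↦ (a,b,3ab−c)` or a
permutation of the entries. -/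
inductive MarkovStep : ℤ × ℤ × ℤ → ℤ × ℤ × ℤ → Prop
  | elementary (a b c : ℤ) : MarkovStep (a, b, c) (a, b, 3 * a * b - c)
  | swap₁₂ (a b c : ℤ) : MarkovStep (a, b, c) (b, a, c)
  | swap₂₃ (a b c : ℤ) : MarkovStep (a, b, c) (a, c, b)

open Relation

private lemma markov_aux : ∀ n : ℕ, ∀ a b c : ℤ, a ≤ b → b ≤ c → c ≤ (n : ℤ) →
    IsMarkovTriple a b c → ReflTransGen MarkovStep (1, 1, 1) (a, b, c) := by
  intro n
  induction n with
  | zero =>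
    intro a b c _ _ hcn h
    exact absurd (lt_of_lt_of_le h.2.2.1 hcn) (by norm_num)
  | succ n ih =>
    intro a b c hab hbc hcn h
    obtain ⟨ha, hb, hc, heq⟩ := h
    rcases eq_or_lt_of_le (by omega : (1:ℤ) ≤ c) with hc1 | hc2
    · -- c = 1, hence a = b = c = 1
      have hc1' : c = 1 := hc1.symm
      have hb1 : b = 1 := le_antisymm (hc1' ▸ hbc) hb
      have ha1 : a = 1 := le_antisymm (hb1 ▸ hab) ha
      subst ha1; subst hb1; subst hc1'
      exact ReflTransGen.refl
    · -- c ≥ 2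
      have hc2' : (2 : ℤ) ≤ c := hc2
      rcases eq_or_lt_of_le (by omega : (1:ℤ) ≤ b) with hb1 | hb2
      · -- b = 1, hence a = 1, equation forces c = 2
        have hb1' : b = 1 := hb1.symm
        have ha1 : a = 1 := le_antisymm (hb1' ▸ hab) ha
        subst ha1; subst hb1'
        have hceq : (c - 1) * (c - 2) = 0 := by linear_combination heq
        have hc2'' : c = 2 := by
          rcases mul_eq_zero.mp hceq with h' | h'
          · omega
          · omega
        subst hc2''
        have : (3 * 1 * 1 - 1 : ℤ) = 2 := by norm_num
        exact ReflTransGen.single (this ▸ MarkovStep.elementary 1 1 1)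
      · -- b ≥ 2 : Vieta jump
        have hb2' : (2 : ℤ) ≤ b := hb2
        set c' : ℤ := 3 * a * b - c with hc'def
        have hprod : (c - b) * (b - c') = 3 * a * b ^ 2 - a ^ 2 - 2 * b ^ 2 := by
          rw [hc'def]; linear_combination heq
        have hrhs : 0 < 3 * a * b ^ 2 - a ^ 2 - 2 * b ^ 2 := by
          nlinarith [mul_nonneg (sub_nonneg.mpr ha.le) (sub_nonneg.mpr hab),
            mul_pos ha (show 0 < b ^ 2 - a by nlinarith)]
        have hprodpos : 0 < (c - b) * (b - c') := hprod ▸ hrhs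
        have hbc' : c' < b ∧ b < c := by
          rcases mul_pos_iff.mp hprodpos with ⟨h1, h2⟩ | ⟨h1, h2⟩
          · exact ⟨by linarith, by linarith⟩
          · exact absurd h1 (by linarith)
        have h2 : c' * c = a ^ 2 + b ^ 2 := by rw [hc'def]; linear_combination -heq
        have hc'pos : 0 < c' := by
          have hab2 : 0 < a ^ 2 + b ^ 2 := by positivity
          rcases mul_pos_iff.mp (h2 ▸ hab2) with ⟨h1, _⟩ | ⟨_, h1⟩
          · exact h1
          · exact absurd hc (by linarith)
        have heq' : a ^ 2 + b ^ 2 + c' ^ 2 = 3 * a * b * c' := by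
          rw [hc'def]; linear_combination heq
        have hbn : b ≤ (n : ℤ) := by omega
        have hback : (3 : ℤ) * a * b - c' = c := by rw [hc'def]; ring
        rcases le_total a c' with hac' | hc'a
        · -- sorted triple (a, c', b)
          have reach := ih a c' b hac' hbc'.1.le hbn
            ⟨ha, hc'pos, hb, by linear_combination heq'⟩
          exact (reach.tail (MarkovStep.swap₂₃ a c' b)).tail
            (hback ▸ MarkovStep.elementary a b c')
        · -- sorted triple (c', a, b)
          have reach := ih c' a b hc'a hab hbn
            ⟨hc'pos, ha, hb, by linear_combination heq'⟩
          exact ((reach.tail (MarkovStep.swap₁₂ c' a b)).tail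
            (MarkovStep.swap₂₃ a c' b)).tail (hback ▸ MarkovStep.elementary a b c')

/-- every Markov triple is obtained from `(1,1,1)` by a finite sequence of
elementary transforms together with permutations of the entries. -/
theorem markov_tree (a b c : ℤ) (h : IsMarkovTriple a b c) :
    Relation.ReflTransGen MarkovStep (1, 1, 1) (a, b, c) := by
  obtain ⟨ha, hb, hc, heq⟩ := h
  have hself : ∀ x : ℤ, 0 < x → x ≤ (x.toNat : ℤ) := fun x hx =>
    le_of_eq (Int.toNat_of_nonneg hx.le).symm
  rcases le_total a b with hab | hba
  · rcases le_total b c with hbc | hcb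
    · exact markov_aux c.toNat a b c hab hbc (hself c hc) ⟨ha, hb, hc, heq⟩
    · rcases le_total a c with hac | hca
      · have r := markov_aux b.toNat a c b hac hcb (hself b hb)
          ⟨ha, hc, hb, by linear_combination heq⟩
        exact r.tail (MarkovStep.swap₂₃ a c b)
      · have r := markov_aux b.toNat c a b hca hab (hself b hb)
          ⟨hc, ha, hb, by linear_combination heq⟩
        exact (r.tail (MarkovStep.swap₁₂ c a b)).tail (MarkovStep.swap₂₃ a c b)
  · rcases le_total a c with hac | hca
    · have r := markov_aux c.toNat b a c hba hac (hself c hc)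
        ⟨hb, ha, hc, by linear_combination heq⟩
      exact r.tail (MarkovStep.swap₁₂ b a c)
    · rcases le_total b c with hbc | hcb
      · have r := markov_aux a.toNat b c a hbc hca (hself a ha)
          ⟨hb, hc, ha, by linear_combination heq⟩
        exact (r.tail (MarkovStep.swap₂₃ b c a)).tail (MarkovStep.swap₁₂ b a c)
      · have r := markov_aux a.toNat c b a hcb hba (hself a ha)
          ⟨hc, hb, ha, by linear_combination heq⟩
        exact ((r.tail (MarkovStep.swap₁₂ c b a)).tail
          (MarkovStep.swap₂₃ b c a)).tail (MarkovStep.swap₁₂ b a c)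
end

section
/- The triple (1,1,1) satisfies the Markov equation, and if (a,b,c) is a Markov triple with a ≤ b ≤ c and c > 1, then 3ab − c < c, so the elementary transform strictly decreases the maximal entry unless (a,b,c) = (1,1,1) or (1,1,2). -/
/-- `(1,1,1)` satisfies the Markov equation, and for any Markov triple
`(a,b,c)` with `a ≤ b ≤ c`, `c > 1` which is not `(1,1,1)` or `(1,1,2)`, the elementary
transform strictly decreases the maximal entry: `3ab − c < c`. -/
theorem markov_descent :
    IsMarkovTriple 1 1 1 ∧
      ∀ a b c : ℤ, IsMarkovTriple a b c → a ≤ b → b ≤ c → 1 < c →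
        (a, b, c) ≠ (1, 1, 1) → (a, b, c) ≠ (1, 1, 2) → 3 * a * b - c < c := by
  constructor
  · exact ⟨one_pos, one_pos, one_pos, by ring⟩
  · rintro a b c ⟨ha, hb, hc, heq⟩ hab hbc hc1 h1 h2
    by_cases hone : a = 1 ∧ b = 1
    · obtain ⟨rfl, rfl⟩ := hone
      have hfac : (c - 1) * (c - 2) = 0 := by nlinarith [heq]
      rcases mul_eq_zero.mp hfac with h | h
      · exact absurd (by omega : (1:ℤ) = 1 ∧ (1:ℤ) = 1 ∧ c = 1) (by simpa using h1)
      · exact absurd (by omega : (1:ℤ) = 1 ∧ (1:ℤ) = 1 ∧ c = 2) (by simpa using h2)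
    · have hb2 : 2 ≤ b := by
        rcases not_and_or.mp hone with h | h <;> omega
      -- key: (b - c) * (b - (3ab - c)) = a² + 2b² - 3ab² < 0
      nlinarith [mul_pos ha hb, mul_nonneg (sub_nonneg.mpr hbc) (sub_nonneg.mpr hab),
        mul_le_mul_of_nonneg_right hab (le_of_lt hb),
        mul_nonneg (sub_nonneg.mpr hbc) (mul_pos ha hb).le,
        sq_nonneg (b - c), sq_nonneg (a - b), mul_pos hb hc]
end

section
/- A one-dimensional integral polytope (segment) of integral length n in ℤᵈ decomposes as a Minkowski sum of n integral segments of integral length 1, and this is its unique decomposition into irreducible integral summands up to translation. -/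
open Pointwise

/-- The canonical map `ℤᵈ → ℝᵈ`. -/
def latticeToReal {d : ℕ} (v : Fin d → ℤ) : Fin d → ℝ := fun i => (v i : ℝ)

/-- An integral polytope in `ℝᵈ`: the convex hull of finitely many lattice points. -/
def IsIntegralPolytope {d : ℕ} (P : Set (Fin d → ℝ)) : Prop :=
  ∃ S : Finset (Fin d → ℤ), P = convexHull ℝ (latticeToReal '' (S : Set (Fin d → ℤ)))

/-- An integral polytope is irreducible if it is not a single point and cannot be
written as the Minkowski sum of two integral polytopes neither of which is a single
point. -/
def IsIrreducibleIntegralPolytope {d : ℕ} (P : Set (Fin d → ℝ)) : Prop :=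
  IsIntegralPolytope P ∧ (¬ ∃ p, P = {p}) ∧
    ¬ ∃ Q R : Set (Fin d → ℝ), IsIntegralPolytope Q ∧ IsIntegralPolytope R ∧
      (¬ ∃ q, Q = {q}) ∧ (¬ ∃ r, R = {r}) ∧ P = Q + R

/-- A primitive lattice vector: its coordinates have no common non-unit divisor. -/
def IsPrimitiveVector {d : ℕ} (v : Fin d → ℤ) : Prop :=
  v ≠ 0 ∧ ∀ m : ℤ, (∀ i, m ∣ v i) → IsUnit m

namespace SegAux
variable {d : ℕ}

lemma ltr_sub (a b : Fin d → ℤ) : latticeToReal (a - b) = latticeToReal a - latticeToReal b := by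
  funext i; simp [latticeToReal]

lemma ltr_add (a b : Fin d → ℤ) : latticeToReal (a + b) = latticeToReal a + latticeToReal b := by
  funext i; simp [latticeToReal]

lemma ltr_smul (m : ℤ) (a : Fin d → ℤ) : latticeToReal (m • a) = (m : ℝ) • latticeToReal a := by
  funext i; simp [latticeToReal]

lemma ltr_zero : latticeToReal (0 : Fin d → ℤ) = 0 := by
  funext i; simp [latticeToReal]

lemma ltr_ne_zero {v : Fin d → ℤ} (hv : v ≠ 0) : latticeToReal v ≠ 0 := by
  intro h; apply hv; funext i
  have := congrFun h i
  simpa [latticeToReal] using this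

lemma Icc_add_Icc_real {c c' : ℝ} (hc : 0 ≤ c) (hc' : 0 ≤ c') :
    Set.Icc (0:ℝ) c + Set.Icc (0:ℝ) c' = Set.Icc 0 (c + c') := by
  ext x
  simp only [Set.mem_add, Set.mem_Icc]
  constructor
  · rintro ⟨a, ⟨ha0, hac⟩, b, ⟨hb0, hbc⟩, rfl⟩
    exact ⟨by linarith, by linarith⟩
  · rintro ⟨hx0, hxc⟩
    refine ⟨min x c, ⟨le_min hx0 hc, min_le_right _ _⟩, x - min x c, ⟨?_, ?_⟩, by ring⟩
    · rcases le_total x c with h | h <;> simp [min_eq_left, min_eq_right, h] <;> linarith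
    · rcases le_total x c with h | h
      · rw [min_eq_left h]; linarith
      · rw [min_eq_right h]; linarith

lemma seg_param (a w : Fin d → ℝ) {c : ℝ} (hc : 0 ≤ c) :
    segment ℝ a (a + c • w) = (fun r : ℝ => a + r • w) '' Set.Icc 0 c := by
  rw [segment_eq_image']
  have h1 : (fun θ : ℝ => a + θ • (a + c • w - a)) = (fun r : ℝ => a + r • w) ∘ (fun θ => θ * c) := by
    funext θ; simp [add_sub_cancel_left, smul_smul, Function.comp]
  rw [h1, Set.image_comp, Set.image_mul_right_Icc zero_le_one hc]
  simp

lemma seg_add (a b w : Fin d → ℝ) {c c' : ℝ} (hc : 0 ≤ c) (hc' : 0 ≤ c') :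
    segment ℝ a (a + c • w) + segment ℝ b (b + c' • w)
      = segment ℝ (a + b) (a + b + (c + c') • w) := by
  rw [seg_param a w hc, seg_param b w hc', seg_param (a+b) w (by linarith),
    ← Icc_add_Icc_real hc hc']
  ext x
  simp only [Set.mem_add, Set.mem_image]
  constructor
  · rintro ⟨_, ⟨r, hr, rfl⟩, _, ⟨s, hs, rfl⟩, rfl⟩
    exact ⟨r + s, ⟨r, hr, s, hs, rfl⟩, by rw [add_smul]; abel⟩
  · rintro ⟨_, ⟨r, hr, s, hs, rfl⟩, rfl⟩
    exact ⟨a + r • w, ⟨r, hr, rfl⟩, b + s • w, ⟨s, hs, rfl⟩, by rw [add_smul]; abel⟩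

lemma smul_cancel {w : Fin d → ℝ} (hw : w ≠ 0) {r s : ℝ} (h : r • w = s • w) : r = s := by
  by_contra hrs
  have h2 : (r - s) • w = 0 := by rw [sub_smul, h, sub_self]
  rcases smul_eq_zero.1 h2 with h3 | h3
  · exact hrs (by linarith [sub_eq_zero.1 h3])
  · exact hw h3

lemma seg_eq_iff {w : Fin d → ℝ} (hw : w ≠ 0) {a b : Fin d → ℝ} {c c' : ℝ}
    (hc : 0 ≤ c) (hc' : 0 ≤ c')
    (h : segment ℝ a (a + c • w) = segment ℝ b (b + c' • w)) : a = b ∧ c = c' := by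
  rw [seg_param a w hc, seg_param b w hc'] at h
  have ha : a ∈ (fun r : ℝ => b + r • w) '' Set.Icc 0 c' := by
    rw [← h]; exact ⟨0, ⟨le_rfl, hc⟩, by simp⟩
  have hb : b ∈ (fun r : ℝ => a + r • w) '' Set.Icc 0 c := by
    rw [h]; exact ⟨0, ⟨le_rfl, hc'⟩, by simp⟩
  obtain ⟨s, hs, hsa⟩ := ha
  obtain ⟨t, ht, htb⟩ := hb
  have hts : (t + s) • w = (0:ℝ) • w := by
    rw [add_smul, zero_smul]
    have h5 : a = a + (t • w + s • w) := by
      conv_lhs => rw [← hsa, ← htb]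
      exact add_assoc _ _ _
    exact (left_eq_add.1 h5)
  have hts0 : t + s = 0 := smul_cancel hw hts
  have ht0 : t = 0 := by linarith [hs.1, ht.1]
  have hs0 : s = 0 := by linarith [hs.1, ht.1]
  have hab : a = b := by rw [← hsa, hs0]; simp
  refine ⟨hab, ?_⟩
  have hc1 : a + c • w ∈ (fun r : ℝ => b + r • w) '' Set.Icc 0 c' := by
    rw [← h]; exact ⟨c, ⟨hc, le_rfl⟩, rfl⟩
  obtain ⟨s₂, hs₂, hs₂a⟩ := hc1
  have : c • w = s₂ • w := by
    have := hs₂a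
    rw [← hab] at this
    exact (add_right_injective a this).symm
  have hcs : c = s₂ := smul_cancel hw this
  have hc2 : b + c' • w ∈ (fun r : ℝ => a + r • w) '' Set.Icc 0 c := by
    rw [h]; exact ⟨c', ⟨hc', le_rfl⟩, rfl⟩
  obtain ⟨t₂, ht₂, ht₂a⟩ := hc2
  have : c' • w = t₂ • w := by
    rw [← hab] at ht₂a
    exact (add_right_injective a ht₂a).symm
  have hct : c' = t₂ := smul_cancel hw this
  have := hs₂.2
  have := ht₂.2
  linarith

lemma exists_int_smul {v u : Fin d → ℤ} (hv : IsPrimitiveVector v)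
    (h : ∃ t : ℝ, latticeToReal u = t • latticeToReal v) : ∃ m : ℤ, u = m • v := by
  obtain ⟨i₀, hi₀⟩ : ∃ i, v i ≠ 0 := by
    by_contra h'; push_neg at h'; exact hv.1 (funext h')
  obtain ⟨t, ht⟩ := h
  have hcoord : ∀ i, (u i : ℝ) = t * (v i : ℝ) := by
    intro i
    have := congrFun ht i
    simpa [latticeToReal] using this
  have key : ∀ i, v i₀ * u i = u i₀ * v i := by
    intro i
    have : ((v i₀ : ℝ)) * (u i) = (u i₀) * (v i) := by
      rw [hcoord i, hcoord i₀]; ring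
    exact_mod_cast this
  set g : ℕ := Int.gcd (u i₀) (v i₀) with hgdef
  have hg0 : (g:ℤ) ≠ 0 := by
    simp only [g, Ne, Int.natCast_eq_zero]
    intro hgg
    exact hi₀ (Int.gcd_eq_zero_iff.1 hgg).2
  obtain ⟨a', ha'⟩ : (g:ℤ) ∣ u i₀ := Int.gcd_dvd_left _ _
  obtain ⟨b', hb'⟩ : (g:ℤ) ∣ v i₀ := Int.gcd_dvd_right _ _
  have hcop : IsCoprime a' b' := by
    have hgpos : 0 < Int.gcd (u i₀) (v i₀) := Int.gcd_pos_of_ne_zero_right _ hi₀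
    have := Int.gcd_div_gcd_div_gcd hgpos
    rw [← Int.isCoprime_iff_gcd_eq_one] at this
    have ha : u i₀ / (g:ℤ) = a' := by rw [ha']; exact Int.mul_ediv_cancel_left _ hg0
    have hb : v i₀ / (g:ℤ) = b' := by rw [hb']; exact Int.mul_ediv_cancel_left _ hg0
    rwa [ha, hb] at this
  have key' : ∀ i, b' * u i = a' * v i := by
    intro i
    have := key i
    rw [ha', hb'] at this
    have : (g:ℤ) * (b' * u i) = (g:ℤ) * (a' * v i) := by ring_nf; ring_nf at this; linarith
    exact mul_left_cancel₀ hg0 this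
  have hbdvd : ∀ i, b' ∣ v i := by
    intro i
    have : b' ∣ a' * v i := ⟨u i, (key' i).symm⟩
    exact (hcop.symm.dvd_of_dvd_mul_left this)
  have hbu : IsUnit b' := hv.2 b' hbdvd
  have hbb : b' * b' = 1 := by
    rcases Int.isUnit_iff.1 hbu with h1 | h1 <;> simp [h1]
  refine ⟨b' * a', funext fun i => ?_⟩
  have := key' i
  have : b' * (b' * u i) = b' * (a' * v i) := by rw [this]
  calc u i = (b' * b') * u i := by rw [hbb]; ring
    _ = b' * a' * v i := by rw [mul_assoc, this]; ring
    _ = (b' * a') • v i := by simp [Pi.smul_apply]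


lemma integral_segment (a b : Fin d → ℤ) :
    IsIntegralPolytope (segment ℝ (latticeToReal a) (latticeToReal b)) := by
  refine ⟨{a, b}, ?_⟩
  rw [Finset.coe_insert, Finset.coe_singleton, Set.image_insert_eq, Set.image_singleton,
    convexHull_pair]

lemma seg_not_point {w : Fin d → ℝ} (hw : w ≠ 0) {c : ℝ} (hc : 0 < c) (a : Fin d → ℝ) :
    ¬ ∃ q, segment ℝ a (a + c • w) = {q} := by
  rintro ⟨q, hq⟩
  have h1 : a ∈ ({q} : Set _) := hq ▸ left_mem_segment ℝ _ _
  have h2 : a + c • w ∈ ({q} : Set _) := hq ▸ right_mem_segment ℝ _ _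
  rw [Set.mem_singleton_iff] at h1 h2
  rw [h1] at h2
  have : c • w = 0 := add_eq_left.1 h2
  rcases smul_eq_zero.1 this with h | h
  · exact absurd h (ne_of_gt hc)
  · exact hw h

/-- an integral polytope contained in a line with primitive direction `v` is a
lattice segment `[a, a + k v]`. -/
lemma polytope_segment {v : Fin d → ℤ} (hv : IsPrimitiveVector v)
    {P : Set (Fin d → ℝ)} (hP : IsIntegralPolytope P) (hne : P.Nonempty)
    (x₀ : Fin d → ℝ) (hline : ∀ x ∈ P, ∃ t : ℝ, x = x₀ + t • latticeToReal v) :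
    ∃ (a : Fin d → ℤ) (k : ℕ),
      P = segment ℝ (latticeToReal a) (latticeToReal a + (k : ℝ) • latticeToReal v) := by
  classical
  obtain ⟨S, hS⟩ := hP
  have hSne : S.Nonempty := by
    rcases S.eq_empty_or_nonempty with h | h
    · exfalso; rw [h] at hS; simp at hS; rw [hS] at hne; exact Set.not_nonempty_empty hne
    · exact h
  obtain ⟨u₀, hu₀⟩ := hSne
  have hmem : ∀ u ∈ S, latticeToReal u ∈ P := fun u hu => hS ▸
    subset_convexHull ℝ _ ⟨u, hu, rfl⟩
  have hint : ∀ u ∈ S, ∃ m : ℤ, u = u₀ + m • v := by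
    intro u hu
    obtain ⟨t, htu⟩ := hline _ (hmem u hu)
    obtain ⟨t₀, htu₀⟩ := hline _ (hmem u₀ hu₀)
    have : latticeToReal (u - u₀) = (t - t₀) • latticeToReal v := by
      rw [ltr_sub, htu, htu₀, sub_smul]; abel
    obtain ⟨m, hm⟩ := exists_int_smul hv ⟨t - t₀, this⟩
    exact ⟨m, by rw [← hm]; abel⟩
  set g : (Fin d → ℤ) → ℤ := fun u =>
    if h : ∃ m : ℤ, u = u₀ + m • v then h.choose else 0 with hgdef
  have hgspec : ∀ u ∈ S, u = u₀ + g u • v := by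
    intro u hu
    have h := hint u hu
    simp only [hgdef, dif_pos h]
    exact h.choose_spec
  set T : Finset ℤ := S.image g with hT
  have hTne : T.Nonempty := ⟨g u₀, Finset.mem_image_of_mem g hu₀⟩
  set k₁ : ℤ := T.min' hTne
  set k₂ : ℤ := T.max' hTne
  have hk : k₁ ≤ k₂ := T.min'_le _ (T.max'_mem hTne)
  set a : Fin d → ℤ := u₀ + k₁ • v with ha
  refine ⟨a, (k₂ - k₁).toNat, ?_⟩
  have hcast : (((k₂ - k₁).toNat : ℝ)) = ((k₂ : ℝ) - k₁) := by
    rw [← Int.cast_natCast, Int.toNat_of_nonneg (by omega)]; push_cast; ring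
  rw [hcast]
  have hend : ∀ m : ℤ, latticeToReal (u₀ + m • v)
      = latticeToReal a + ((m : ℝ) - k₁) • latticeToReal v := by
    intro m
    rw [ha, ltr_add, ltr_add, ltr_smul, ltr_smul, sub_smul]
    abel
  have hgen : ∀ u ∈ S, latticeToReal u ∈
      segment ℝ (latticeToReal a) (latticeToReal a + ((k₂:ℝ) - k₁) • latticeToReal v) := by
    intro u hu
    rw [seg_param _ _ (sub_nonneg.2 (show (k₁:ℝ) ≤ k₂ by exact_mod_cast hk))]
    have h1 : k₁ ≤ g u := T.min'_le _ (Finset.mem_image_of_mem g hu)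
    have h2 : g u ≤ k₂ := T.le_max' _ (Finset.mem_image_of_mem g hu)
    refine ⟨(g u : ℝ) - k₁, Set.mem_Icc.2 ⟨sub_nonneg.2 (by exact_mod_cast h1),
      sub_le_sub_right (by exact_mod_cast h2) _⟩, ?_⟩
    show latticeToReal a + ((g u : ℝ) - k₁) • latticeToReal v = latticeToReal u
    rw [← hend]
    exact congrArg latticeToReal (hgspec u hu).symm
  apply Set.Subset.antisymm
  · rw [hS]
    apply convexHull_min _ (convex_segment _ _)
    rintro x ⟨u, hu, rfl⟩
    exact hgen u hu
  · -- segment ⊆ P : endpoints are in latticeToReal '' S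
    obtain ⟨u₁, hu₁S, hu₁⟩ := Finset.mem_image.1 (T.min'_mem hTne)
    obtain ⟨u₂, hu₂S, hu₂⟩ := Finset.mem_image.1 (T.max'_mem hTne)
    have e1 : latticeToReal a = latticeToReal u₁ := by
      have := hgspec u₁ hu₁S
      rw [hu₁] at this
      rw [ha, ← this]
    have e2 : latticeToReal a + ((k₂:ℝ) - k₁) • latticeToReal v = latticeToReal u₂ := by
      have := hgspec u₂ hu₂S
      rw [hu₂] at this
      rw [← hend k₂, ← this]
    rw [hS, e2, e1]
    exact segment_subset_convexHull ⟨u₁, hu₁S, rfl⟩ ⟨u₂, hu₂S, rfl⟩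

lemma irr_k_eq_one {v : Fin d → ℤ} (hv : IsPrimitiveVector v)
    {P : Set (Fin d → ℝ)} (hirr : IsIrreducibleIntegralPolytope P)
    {a : Fin d → ℤ} {k : ℕ}
    (hP : P = segment ℝ (latticeToReal a) (latticeToReal a + (k:ℝ) • latticeToReal v)) :
    k = 1 := by
  have hw := ltr_ne_zero hv.1
  rcases Nat.lt_or_ge k 1 with h | h
  · exfalso
    apply hirr.2.1
    have hk0 : k = 0 := by omega
    subst hk0
    exact ⟨latticeToReal a, by simpa [segment_same] using hP⟩
  rcases Nat.lt_or_ge k 2 with h2 | h2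
  · omega
  exfalso
  apply hirr.2.2
  refine ⟨segment ℝ (latticeToReal a) (latticeToReal a + (1:ℝ) • latticeToReal v),
    segment ℝ (0 : Fin d → ℝ) ((0 : Fin d → ℝ) + ((k:ℝ) - 1) • latticeToReal v),
    ?_, ?_, ?_, ?_, ?_⟩
  · have := integral_segment a (a + v)
    rwa [ltr_add, show latticeToReal v = (1:ℝ) • latticeToReal v from (one_smul _ _).symm]
      at this
  · have := integral_segment 0 (((k:ℤ) - 1) • v)
    rwa [ltr_zero, ltr_smul, show (((k:ℤ) - 1 : ℤ) : ℝ) = (k:ℝ) - 1 by push_cast; ring,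
      show (((k:ℝ) - 1) • latticeToReal v : Fin d → ℝ)
        = 0 + ((k:ℝ) - 1) • latticeToReal v from (zero_add _).symm] at this
  · exact seg_not_point hw one_pos _
  · refine seg_not_point hw ?_ _
    have : (2:ℝ) ≤ (k:ℝ) := by exact_mod_cast h2
    linarith
  · rw [hP, seg_add _ _ _ (by norm_num) (by
      have : (2:ℝ) ≤ (k:ℝ) := by exact_mod_cast h2
      linarith)]
    norm_num

lemma replicate_sum (w : Fin d → ℝ) : ∀ n : ℕ,
    (List.replicate n (segment ℝ 0 w)).sum = segment ℝ 0 ((n : ℝ) • w)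
  | 0 => by
      simp only [List.replicate, List.sum_nil, Nat.cast_zero, zero_smul, segment_same]
      exact Set.singleton_zero.symm
  | (n+1) => by
      rw [List.replicate_succ, List.sum_cons, replicate_sum w n]
      have h1 : segment ℝ (0 : Fin d → ℝ) w = segment ℝ 0 (0 + (1:ℝ) • w) := by simp
      have h2 : segment ℝ (0 : Fin d → ℝ) ((n:ℝ) • w) = segment ℝ 0 (0 + (n:ℝ) • w) := by simp
      rw [h1, h2, seg_add _ _ _ (by norm_num) (by positivity)]
      push_cast
      simp [add_comm]

lemma singleton_add_seg (a b w : Fin d → ℝ) {c : ℝ} (hc : 0 ≤ c) :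
    ({a} : Set (Fin d → ℝ)) + segment ℝ b (b + c • w) = segment ℝ (a + b) (a + b + c • w) := by
  have h1 : ({a} : Set (Fin d → ℝ)) = segment ℝ a (a + (0:ℝ) • w) := by simp [segment_same]
  rw [h1, seg_add _ _ _ le_rfl hc, zero_add]

lemma trans_seg (b w : Fin d → ℝ) :
    (fun x => x + b) '' segment ℝ 0 w = segment ℝ b (b + w) := by
  have h1 : segment ℝ (0 : Fin d → ℝ) w = segment ℝ 0 (0 + (1:ℝ) • w) := by simp
  have h2 : segment ℝ b (b + w) = segment ℝ b (b + (1:ℝ) • w) := by simp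
  rw [h1, h2, seg_param _ _ (zero_le_one), seg_param _ _ (zero_le_one), ← Set.image_comp]
  congr 1
  funext r
  simp [add_comm]

lemma list_sum_translates (w : Fin d → ℝ) (L : List (Set (Fin d → ℝ)))
    (h : ∀ P ∈ L, ∃ a : Fin d → ℝ, P = segment ℝ a (a + w)) :
    ∃ A, L.sum = segment ℝ A (A + (L.length : ℝ) • w) := by
  induction L with
  | nil =>
      refine ⟨0, ?_⟩
      simp only [List.sum_nil, List.length_nil, Nat.cast_zero, zero_smul, add_zero, segment_same]
      exact Set.singleton_zero.symm
  | cons P L ih =>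
      obtain ⟨a, ha⟩ := h P (List.mem_cons_self)
      obtain ⟨A, hA⟩ := ih (fun Q hQ => h Q (List.mem_cons_of_mem _ hQ))
      refine ⟨a + A, ?_⟩
      rw [List.sum_cons, ha, hA,
        show a + w = a + (1:ℝ) • w by simp,
        show A + (L.length:ℝ) • w = A + (L.length:ℝ) • w from rfl,
        seg_add _ _ _ (by norm_num) (by positivity)]
      push_cast
      simp [add_comm]

end SegAux

open SegAux

/-- a one-dimensional integral polytope (segment) of integral length `n`
in `ℤᵈ`, i.e. the segment from `p` to `p + n • v` with `v` primitive, decomposes as the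
Minkowski sum of `n` integral segments of integral length 1, and every decomposition of
it into irreducible integral summands consists of exactly `n` summands, each a lattice
translate of the unit segment `[0, v]`. -/
theorem segment_minkowski_decomposition {d : ℕ} (p v : Fin d → ℤ) (n : ℕ) (hn : 0 < n)
    (hv : IsPrimitiveVector v) :
    segment ℝ (latticeToReal p) (latticeToReal p + n • latticeToReal v) =
        {latticeToReal p} + (List.replicate n (segment ℝ 0 (latticeToReal v))).sum ∧
      ∀ L : List (Set (Fin d → ℝ)), (∀ P ∈ L, IsIrreducibleIntegralPolytope P) →
        (∃ q : Fin d → ℤ, L.sum + {latticeToReal q} =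
            segment ℝ (latticeToReal p) (latticeToReal p + n • latticeToReal v)) →
          L.length = n ∧
            ∀ P ∈ L, ∃ t : Fin d → ℤ,
              P = (fun x => x + latticeToReal t) '' segment ℝ 0 (latticeToReal v) := by
  classical
  have hw : latticeToReal v ≠ 0 := ltr_ne_zero hv.1
  set w := latticeToReal v with hwdef
  have hns : (n • latticeToReal v : Fin d → ℝ) = (n:ℝ) • w := (Nat.cast_smul_eq_nsmul ℝ n _).symm
  constructor
  · rw [hns, replicate_sum,
      show segment ℝ (0 : Fin d → ℝ) ((n:ℝ) • w) = segment ℝ 0 (0 + (n:ℝ) • w) by simp,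
      singleton_add_seg _ _ _ (by positivity)]
    simp
  · rintro L hL ⟨q, hq⟩
    rw [hns] at hq
    have segNe : (segment ℝ (latticeToReal p) (latticeToReal p + (n:ℝ) • w)).Nonempty :=
      ⟨_, left_mem_segment ℝ _ _⟩
    have key : ∀ P ∈ L, ∃ a : Fin d → ℤ,
        P = segment ℝ (latticeToReal a) (latticeToReal a + w) := by
      intro P hPL
      obtain ⟨l₁, l₂, hLsplit⟩ := List.append_of_mem hPL
      set C := l₁.sum + l₂.sum + ({latticeToReal q} : Set (Fin d → ℝ)) with hC
      have hPC : P + C = segment ℝ (latticeToReal p) (latticeToReal p + (n:ℝ) • w) := by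
        rw [← hq, hLsplit, List.sum_append, List.sum_cons, hC]
        abel
      have hPne : P.Nonempty := (Set.add_nonempty.1 (hPC ▸ segNe)).1
      have hCne : C.Nonempty := (Set.add_nonempty.1 (hPC ▸ segNe)).2
      obtain ⟨c, hc⟩ := hCne
      have hline : ∀ x ∈ P, ∃ t : ℝ, x = (latticeToReal p - c) + t • w := by
        intro x hx
        have hxc : x + c ∈ segment ℝ (latticeToReal p) (latticeToReal p + (n:ℝ) • w) :=
          hPC ▸ Set.add_mem_add hx hc
        rw [seg_param _ _ (by positivity)] at hxc
        obtain ⟨r, _, hxr⟩ := hxc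
        refine ⟨r, add_right_cancel (b := c) ?_⟩
        rw [hxr.symm]
        show latticeToReal p + r • w = latticeToReal p - c + r • w + c
        abel
      obtain ⟨a, k, hPseg⟩ := polytope_segment hv (hL P hPL).1 hPne _ hline
      have hk1 : k = 1 := irr_k_eq_one hv (hL P hPL) hPseg
      refine ⟨a, ?_⟩
      rw [hPseg, hk1]
      norm_num
      rfl
    obtain ⟨A, hA⟩ := list_sum_translates w L
      (fun P hP => (key P hP).elim fun a ha => ⟨latticeToReal a, ha⟩)
    have hseg : segment ℝ (latticeToReal q + A) (latticeToReal q + A + (L.length:ℝ) • w)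
        = segment ℝ (latticeToReal p) (latticeToReal p + (n:ℝ) • w) := by
      rw [← hq, hA, add_comm (segment ℝ A (A + (L.length:ℝ) • w)),
        singleton_add_seg _ _ _ (by positivity)]
    have := (seg_eq_iff hw (by positivity) (by positivity) hseg).2
    have hlen : L.length = n := by exact_mod_cast this
    refine ⟨hlen, ?_⟩
    intro P hP
    obtain ⟨a, ha⟩ := key P hP
    exact ⟨a, by rw [trans_seg, ← ha]⟩
end

section
/- The constant term of every power f^i of a Laurent polynomial f in variables x₀,…,xₙ is invariant under the cluster-type change of variables x₀ ↦ x₀/g(x₁,…,xₙ), x_j ↦ x_j for j ≥ 1, provided the result is again a Laurent polynomial; equivalently, for Laurent polynomials f and f′ related by such a substitution, the constant terms of f^i and (f′)^i agree for all i ≥ 0. -/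
open LaurentPolynomial

/-- Laurent polynomials in the variables `x₁, …, xₙ`. -/
abbrev LaurentRing (n : ℕ) := AddMonoidAlgebra ℂ (Fin n → ℤ)

/-- The constant term (coefficient at `x₀⁰x₁⁰⋯xₙ⁰`) of a Laurent polynomial in
`x₀, x₁, …, xₙ`, written as a Laurent polynomial in `x₀` (the variable `T`) with
coefficients Laurent polynomials in `x₁, …, xₙ`. -/
noncomputable def constantTerm {n : ℕ} (f : LaurentPolynomial (LaurentRing n)) : ℂ :=
  (AddMonoidAlgebra.coeff (AddMonoidAlgebra.coeff f 0)) 0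

lemma trinomial_mul_apply {R : Type*} [CommRing R] (a b c : R)
    (p : LaurentPolynomial R) (k : ℤ) :
    AddMonoidAlgebra.coeff (((C a * T 1 + C b + C c * T (-1)) * p : LaurentPolynomial R)) k
      = a * AddMonoidAlgebra.coeff p (k - 1) + b * AddMonoidAlgebra.coeff p k + c * AddMonoidAlgebra.coeff p (k + 1) := by
  have hb : (C b : LaurentPolynomial R) = AddMonoidAlgebra.single (0 : ℤ) b := by
    rw [single_eq_C_mul_T, T_zero, mul_one]
  rw [← single_eq_C_mul_T, ← single_eq_C_mul_T, hb, add_mul, add_mul]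
  rw [AddMonoidAlgebra.coeff_add, AddMonoidAlgebra.coeff_add]
  erw [Finsupp.add_apply, Finsupp.add_apply]
  rw [AddMonoidAlgebra.coeff_single_mul_apply, AddMonoidAlgebra.coeff_single_mul_apply,
    AddMonoidAlgebra.coeff_single_mul_apply]
  ring_nf

lemma trinomial_pow_key {R : Type*} [CommRing R] (b c g h : R) (i : ℕ) :
    (∀ m : ℕ,
      AddMonoidAlgebra.coeff (((C (g * h) * T 1 + C b + C c * T (-1)) ^ i : LaurentPolynomial R)) (m : ℤ)
        = g ^ m * AddMonoidAlgebra.coeff (((C h * T 1 + C b + C (c * g) * T (-1)) ^ i : LaurentPolynomial R)) (m : ℤ))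
    ∧ (∀ m : ℕ,
      AddMonoidAlgebra.coeff (((C h * T 1 + C b + C (c * g) * T (-1)) ^ i : LaurentPolynomial R)) (-(m : ℤ))
        = g ^ m * AddMonoidAlgebra.coeff (((C (g * h) * T 1 + C b + C c * T (-1)) ^ i : LaurentPolynomial R)) (-(m : ℤ))) := by
  induction i with
  | zero =>
    constructor <;> intro m <;>
    · rcases Nat.eq_zero_or_pos m with hm | hm
      · subst hm; simp
      · have h1 : ((m : ℤ) ≠ 0) := by exact_mod_cast hm.ne'
        simp only [pow_zero]
        rw [AddMonoidAlgebra.one_def, AddMonoidAlgebra.coeff_single_apply]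
        simp [Ne.symm h1, h1, neg_eq_zero, hm.ne']
  | succ i ih =>
    obtain ⟨ihp, ihn⟩ := ih
    constructor <;> intro m
    · rw [pow_succ', pow_succ', trinomial_mul_apply, trinomial_mul_apply]
      rcases m with _ | t
      · have e1 : ((0:ℕ) : ℤ) - 1 = -((1:ℕ) : ℤ) := by norm_num
        have e2 : ((0:ℕ) : ℤ) + 1 = ((1:ℕ) : ℤ) := by norm_num
        rw [e1, e2, ihn 1, ihp 0, ihp 1]
        ring
      · have e1 : ((t + 1 : ℕ) : ℤ) - 1 = ((t : ℕ) : ℤ) := by push_cast; ring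
        have e2 : ((t + 1 : ℕ) : ℤ) + 1 = ((t + 2 : ℕ) : ℤ) := by push_cast; ring
        rw [e1, e2, ihp t, ihp (t+1), ihp (t+2)]
        push_cast
        ring
    · rw [pow_succ', pow_succ', trinomial_mul_apply, trinomial_mul_apply]
      rcases m with _ | t
      · have e1 : -((0:ℕ) : ℤ) - 1 = -((1:ℕ) : ℤ) := by norm_num
        have e2 : -((0:ℕ) : ℤ) + 1 = ((1:ℕ) : ℤ) := by norm_num
        have e0 : -((0:ℕ) : ℤ) = ((0:ℕ) : ℤ) := by norm_num
        rw [e1, e2, e0, ihn 1, ihp 0, ihp 1]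
        ring
      · have e1 : -((t + 1 : ℕ) : ℤ) - 1 = -((t + 2 : ℕ) : ℤ) := by push_cast; ring
        have e2 : -((t + 1 : ℕ) : ℤ) + 1 = -((t : ℕ) : ℤ) := by push_cast; ring
        rw [e1, e2, ihn (t+2), ihn t, ihn (t+1)]
        push_cast
        ring

/-- if `f = f₊·x₀ + f₀ + f₋/x₀` with `f₊ = g·h`, and
`f′ = (f₊/g)·x₀ + f₀ + f₋·g/x₀` is its transform under the cluster-type change of
variables `x₀ ↦ x₀/g`, then for every `i ≥ 0` the constant terms of `f^i` and `(f′)^i`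
agree. -/
theorem constantTerm_pow_cluster_invariant {n : ℕ}
    (fplus f0 fminus g h : LaurentRing n) (hfac : fplus = g * h) (i : ℕ) :
    constantTerm ((C fplus * T 1 + C f0 + C fminus * T (-1)) ^ i) =
      constantTerm ((C h * T 1 + C f0 + C (fminus * g) * T (-1)) ^ i) := by
  subst hfac
  have key := (trinomial_pow_key f0 fminus g h i).1 0
  simp only [Nat.cast_zero, pow_zero, one_mul] at key
  unfold constantTerm
  rw [key]
end

section
/- Let f = f₊(x₁,…,xₙ)·x₀ + f₀(x₁,…,xₙ) + f₋(x₁,…,xₙ)/x₀ be a Laurent polynomial with f₊ = f₁·f₂ a product of Laurent polynomials. Then the substitution x₀ ↦ x₀/f₂ transforms f into the Laurent polynomial f′ = f₁·x₀ + f₀ + f₋·f₂/x₀. -/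
open LaurentPolynomial

set_option maxHeartbeats 1000000
set_option synthInstance.maxHeartbeats 400000

noncomputable instance (n : ℕ) : IsDomain (LaurentRing n) :=
  NoZeroDivisors.to_isDomain _

noncomputable instance (n : ℕ) : IsDomain (LaurentPolynomial (LaurentRing n)) :=
  NoZeroDivisors.to_isDomain _

/-- The field of fractions of the ring of Laurent polynomials in `x₀, x₁, …, xₙ`
(Laurent polynomials in `x₀` with coefficients Laurent polynomials in `x₁, …, xₙ`). -/
abbrev LaurentFractionField (n : ℕ) := FractionRing (LaurentPolynomial (LaurentRing n))

/-- The embedding of Laurent polynomials into the field of fractions. -/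
noncomputable def ι (n : ℕ) :
    LaurentPolynomial (LaurentRing n) →+* LaurentFractionField n :=
  algebraMap _ _

/-- let `f = f₊·x₀ + f₀ + f₋/x₀` be a Laurent polynomial with
`f₊ = f₁·f₂`. Then, in the field of fractions, substituting `x₀ ↦ x₀/f₂` into `f`
yields the Laurent polynomial `f′ = f₁·x₀ + f₀ + f₋·f₂/x₀`. -/
theorem cluster_substitution {n : ℕ} (fplus f0 fminus f1 f2 : LaurentRing n)
    (hfac : fplus = f1 * f2) (hf2 : f2 ≠ 0) :
    ι n (C fplus) * (ι n (T 1) / ι n (C f2)) + ι n (C f0) +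
        ι n (C fminus) * (ι n (C f2) / ι n (T 1)) =
      ι n (C f1 * T 1 + C f0 + C (fminus * f2) * T (-1)) := by
  subst hfac
  have hinj : Function.Injective (ι n) :=
    IsFractionRing.injective (LaurentPolynomial (LaurentRing n)) (LaurentFractionField n)
  have hC2 : ι n (C f2) ≠ 0 := by
    rw [Ne, map_eq_zero_iff _ hinj, ← single_eq_C, AddMonoidAlgebra.single_eq_zero]
    exact hf2
  have hT : ι n (T 1) ≠ 0 := by
    rw [Ne, map_eq_zero_iff _ hinj]
    show ¬ (AddMonoidAlgebra.single (1:ℤ) (1 : LaurentRing n)) = 0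
    rw [AddMonoidAlgebra.single_eq_zero]
    exact one_ne_zero
  have hTinv : ι n (T (-1 : ℤ)) * ι n (T 1) = 1 := by
    rw [← map_mul, ← T_add]; norm_num
  simp only [map_add, map_mul]
  field_simp
  linear_combination (-(ι n (C fminus) * ι n (C f2))) * hTinv
end

section
/- The cluster-type change of variables y ↦ y/(x+1) applied to f₀ = (x+1)²/(xyz) + y + z yields f₁ = (x+1)/(xyz) + y(x+1) + z, and applying the same change of variables to f₁ returns f₀ up to the toric change of variables interchanging the roles appropriately. -/
set_option synthInstance.maxHeartbeats 1000000
set_option maxHeartbeats 1000000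


/-- The field `ℂ(x,y,z)` of rational functions in three variables. -/
abbrev K3 := FractionRing (MvPolynomial (Fin 3) ℂ)

/-- The coordinate functions `x, y, z` in `ℂ(x,y,z)`. -/
noncomputable def Xv (i : Fin 3) : K3 := algebraMap (MvPolynomial (Fin 3) ℂ) K3 (MvPolynomial.X i)

/-- The monomial in `x, y, z` with exponent vector given by the `i`-th row of an
integer matrix `M`; substituting these monomials for the variables is the toric change
of variables attached to `M ∈ GL(3,ℤ)`. -/
noncomputable def toricMono (M : Matrix (Fin 3) (Fin 3) ℤ) (i : Fin 3) : K3 :=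
  Xv 0 ^ M i 0 * Xv 1 ^ M i 1 * Xv 2 ^ M i 2

/-- `f₀ = (x+1)²/(xyz) + y + z`, the Hori–Vafa weak LG model of the quadric threefold,
as a function of the three (invertible) variables. -/
noncomputable def F₀ (x y z : K3) : K3 := (x + 1) ^ 2 / (x * y * z) + y + z

/-- `f₁ = (x+1)/(xyz) + y(x+1) + z` as a function of the three variables. -/
noncomputable def F₁ (x y z : K3) : K3 := (x + 1) / (x * y * z) + y * (x + 1) + z

lemma Xv_ne_zero (i : Fin 3) : Xv i ≠ 0 := by
  unfold Xv
  simp only [ne_eq, map_eq_zero_iff _ (IsFractionRing.injective (MvPolynomial (Fin 3) ℂ) K3)]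
  exact MvPolynomial.X_ne_zero i

lemma Xv_add_one_ne_zero (i : Fin 3) : Xv i + 1 ≠ 0 := by
  unfold Xv
  rw [show (1 : K3) = algebraMap (MvPolynomial (Fin 3) ℂ) K3 1 by simp, ← map_add]
  simp only [ne_eq, map_eq_zero_iff _ (IsFractionRing.injective (MvPolynomial (Fin 3) ℂ) K3)]
  intro h
  have := congrArg (MvPolynomial.coeff (Finsupp.single i 1)) h
  simp [MvPolynomial.coeff_one, eq_comm, Finsupp.single_eq_zero] at this

/-- the cluster-type change of variables `y ↦ y/(x+1)` (i.e. substituting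
`y(x+1)` for `y`) transforms `f₀` into `f₁`, and applying the same change of variables
to `f₁` returns `f₀` up to a toric change of variables (a monomial substitution given
by a matrix in `GL(3,ℤ)`). -/
theorem quadric_cluster_transformation :
    F₀ (Xv 0) (Xv 1 * (Xv 0 + 1)) (Xv 2) = F₁ (Xv 0) (Xv 1) (Xv 2) ∧
      ∃ M : Matrix (Fin 3) (Fin 3) ℤ, IsUnit M.det ∧
        F₁ (Xv 0) (Xv 1 * (Xv 0 + 1)) (Xv 2) =
          F₀ (toricMono M 0) (toricMono M 1) (toricMono M 2) := by
  have hx := Xv_ne_zero 0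
  have hy := Xv_ne_zero 1
  have hz := Xv_ne_zero 2
  have hx1 := Xv_add_one_ne_zero 0
  constructor
  · unfold F₀ F₁
    field_simp
  · refine ⟨!![-1,0,0; 0,0,1; -1,-1,-1], ?_, ?_⟩
    · decide
    · unfold F₀ F₁ toricMono
      norm_num [Matrix.cons_val_zero, Matrix.cons_val_one, Matrix.head_cons,
        Matrix.cons_val_two, Matrix.tail_cons, zpow_neg, zpow_one]
      field_simp
      ring
end
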